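/- Let l12, l13, l23 be positive reals satisfying the strict triangle inequalities, and for w = (w1,w2,w3) ∈ ℝ³ let the vertex-scaled side lengths be l̃ij = exp(wi+wj)·lij. On the open set U ⊆ ℝ³ of those w for which l̃ satisfies the strict triangle inequalities, let θi(w) ∈ (0,π) denote the inner angle at vertex i of the Euclidean triangle with side lengths l̃ (given by the law of cosines, θ1 = arccos((l̃12² + l̃13² − l̃23²)/(2·l̃12·l̃13)), etc.). Then θ1 is differentiable on U and its partial derivative with respect to w2 satisfies ∂θ1/∂w2 = cot θ3 (the cotangent of the angle opposite the edge joining vertices 1 and 2) at every w ∈ U; the analogous formula ∂θi/∂wj = cot θk holds for every permutation (i,j,k) of (1,2,3). -/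

import Mathlib

set_option maxHeartbeats 1000000

/-- Vertex-scaled edge length: `exp (w i + w j) * l i j`. -/
noncomputable def scaledLen (l : Fin 3 → Fin 3 → ℝ) (w : Fin 3 → ℝ) (i j : Fin 3) : ℝ :=
  Real.exp (w i + w j) * l i j

/-- The inner angle at vertex `i` of the vertex-scaled triangle, by the law of cosines. -/
noncomputable def scaledAngle (l : Fin 3 → Fin 3 → ℝ) (i : Fin 3) (w : Fin 3 → ℝ) : ℝ :=
  Real.arccos ((scaledLen l w i (i + 1) ^ 2 + scaledLen l w i (i + 2) ^ 2
      - scaledLen l w (i + 1) (i + 2) ^ 2) /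
    (2 * scaledLen l w i (i + 1) * scaledLen l w i (i + 2)))

open Real ContinuousLinearMap

noncomputable def pr (m : Fin 3) : (Fin 3 → ℝ) →L[ℝ] ℝ := ContinuousLinearMap.proj m

lemma hasFD (i1 i2 : Fin 3) (a0 : ℝ) (w : Fin 3 → ℝ) :
    HasFDerivAt (fun v : Fin 3 → ℝ => Real.exp (v i1 + v i2) * a0)
      (a0 • Real.exp (w i1 + w i2) • (pr i1 + pr i2)) w := by
  have hL : HasFDerivAt (fun v : Fin 3 → ℝ => v i1 + v i2) (pr i1 + pr i2) w :=
    (pr i1 + pr i2).hasFDerivAt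
  exact ((Real.hasDerivAt_exp (w i1 + w i2)).comp_hasFDerivAt w hL).mul_const a0

lemma core (i1 i2 i3 : Fin 3) (h12 : i1 ≠ i2) (h32 : i3 ≠ i2)
    (a0 b0 c0 : ℝ) (ha0 : 0 < a0) (hb0 : 0 < b0) (hc0 : 0 < c0)
    (w : Fin 3 → ℝ)
    (t1 : Real.exp (w i2 + w i3) * c0 < Real.exp (w i1 + w i2) * a0 + Real.exp (w i1 + w i3) * b0)
    (t2 : Real.exp (w i1 + w i2) * a0 < Real.exp (w i1 + w i3) * b0 + Real.exp (w i2 + w i3) * c0)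
    (t3 : Real.exp (w i1 + w i3) * b0 < Real.exp (w i1 + w i2) * a0 + Real.exp (w i2 + w i3) * c0) :
    DifferentiableAt ℝ (fun v => Real.arccos
      ((Real.exp (v i1 + v i2) * a0 * (Real.exp (v i1 + v i2) * a0)
        + Real.exp (v i1 + v i3) * b0 * (Real.exp (v i1 + v i3) * b0)
        - Real.exp (v i2 + v i3) * c0 * (Real.exp (v i2 + v i3) * c0))
        * (2 * (Real.exp (v i1 + v i2) * a0) * (Real.exp (v i1 + v i3) * b0))⁻¹)) w ∧
    fderiv ℝ (fun v => Real.arccos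
      ((Real.exp (v i1 + v i2) * a0 * (Real.exp (v i1 + v i2) * a0)
        + Real.exp (v i1 + v i3) * b0 * (Real.exp (v i1 + v i3) * b0)
        - Real.exp (v i2 + v i3) * c0 * (Real.exp (v i2 + v i3) * c0))
        * (2 * (Real.exp (v i1 + v i2) * a0) * (Real.exp (v i1 + v i3) * b0))⁻¹)) w
      (Pi.single i2 1)
    = Real.cot (Real.arccos
      ((Real.exp (w i1 + w i3) * b0 * (Real.exp (w i1 + w i3) * b0)
        + Real.exp (w i2 + w i3) * c0 * (Real.exp (w i2 + w i3) * c0)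
        - Real.exp (w i1 + w i2) * a0 * (Real.exp (w i1 + w i2) * a0))
        * (2 * (Real.exp (w i1 + w i3) * b0) * (Real.exp (w i2 + w i3) * c0))⁻¹)) := by
  have hA := hasFD i1 i2 a0 w
  have hB := hasFD i1 i3 b0 w
  have hC := hasFD i2 i3 c0 w
  set a := Real.exp (w i1 + w i2) * a0 with ha_def
  set b := Real.exp (w i1 + w i3) * b0 with hb_def
  set c := Real.exp (w i2 + w i3) * c0 with hc_def
  have ha : 0 < a := mul_pos (Real.exp_pos _) ha0
  have hb : 0 < b := mul_pos (Real.exp_pos _) hb0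
  have hc : 0 < c := mul_pos (Real.exp_pos _) hc0
  have hDne : 2 * a * b ≠ 0 := by positivity
  have hN := ((hA.mul hA).add (hB.mul hB)).sub (hC.mul hC)
  have hD := (hA.const_mul 2).mul hB
  have hInv := (hasDerivAt_inv hDne).comp_hasFDerivAt w hD
  have hQ := hN.mul hInv
  -- bounds on Q
  set Q : ℝ := (a * a + b * b - c * c) * (2 * a * b)⁻¹ with hQ_def
  have hS : 0 < (a + b + c) * (b + c - a) * (a + c - b) * (a + b - c) := by
    apply mul_pos; apply mul_pos; apply mul_pos <;> linarith
    all_goals linarith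
  have h1mQ : 1 - Q ^ 2 = ((a + b + c) * (b + c - a) * (a + c - b) * (a + b - c)) / (2 * a * b) ^ 2 := by
    rw [hQ_def]; field_simp; ring
  have hQlt : Q ^ 2 < 1 := by
    have h0 : 0 < 1 - Q ^ 2 := by rw [h1mQ]; exact div_pos hS (by positivity)
    linarith
  have hQm1 : Q ≠ -1 := by intro h; rw [h] at hQlt; norm_num at hQlt
  have hQ1 : Q ≠ 1 := by intro h; rw [h] at hQlt; norm_num at hQlt
  have hAr := (Real.hasDerivAt_arccos hQm1 hQ1).comp_hasFDerivAt w hQ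
  refine ⟨hAr.differentiableAt, ?_⟩
  have hfd : fderiv ℝ (fun v => Real.arccos
      ((Real.exp (v i1 + v i2) * a0 * (Real.exp (v i1 + v i2) * a0)
        + Real.exp (v i1 + v i3) * b0 * (Real.exp (v i1 + v i3) * b0)
        - Real.exp (v i2 + v i3) * c0 * (Real.exp (v i2 + v i3) * c0))
        * (2 * (Real.exp (v i1 + v i2) * a0) * (Real.exp (v i1 + v i3) * b0))⁻¹)) w = _ := hAr.fderiv
  rw [hfd]
  simp only [ContinuousLinearMap.smul_apply, ContinuousLinearMap.add_apply,
    ContinuousLinearMap.sub_apply, ContinuousLinearMap.coe_smul', Pi.smul_apply, pr,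
    ContinuousLinearMap.proj_apply, Function.comp_apply, smul_eq_mul, Pi.mul_apply, Pi.add_apply,
    Pi.sub_apply,
    Pi.single_eq_same, Pi.single_eq_of_ne h12, Pi.single_eq_of_ne h32]
  rw [← ha_def, ← hb_def, ← hc_def]
  simp only [mul_zero, mul_one, zero_add, add_zero, zero_mul]
  have hax : a0 * Real.exp (w i1 + w i2) = a := by rw [ha_def]; ring
  have hcx : c0 * Real.exp (w i2 + w i3) = c := by rw [hc_def]; ring
  rw [hax, hcx]
  have hQk2 : 1 - ((b * b + c * c - a * a) * (2 * b * c)⁻¹) ^ 2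
      = ((a + b + c) * (b + c - a) * (a + c - b) * (a + b - c)) / (2 * b * c) ^ 2 := by
    field_simp; ring
  have hQkb : ((b * b + c * c - a * a) * (2 * b * c)⁻¹) ^ 2 < 1 := by
    have h0 : 0 < 1 - ((b * b + c * c - a * a) * (2 * b * c)⁻¹) ^ 2 := by
      rw [hQk2]; exact div_pos hS (by positivity)
    linarith
  have hk1 : -1 ≤ (b * b + c * c - a * a) * (2 * b * c)⁻¹ := by nlinarith [hQkb]
  have hk2 : (b * b + c * c - a * a) * (2 * b * c)⁻¹ ≤ 1 := by nlinarith [hQkb]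
  set s := Real.sqrt ((a + b + c) * (b + c - a) * (a + c - b) * (a + b - c)) with hs_def
  have hs : 0 < s := Real.sqrt_pos.mpr hS
  have hsq1 : Real.sqrt (1 - Q ^ 2) = s / (2 * a * b) := by
    rw [h1mQ, hs_def, Real.sqrt_div hS.le, Real.sqrt_sq (by positivity)]
  have hsq2 : Real.sqrt (1 - ((b * b + c * c - a * a) * (2 * b * c)⁻¹) ^ 2) = s / (2 * b * c) := by
    rw [hQk2, hs_def, Real.sqrt_div hS.le, Real.sqrt_sq (by positivity)]
  rw [Real.cot_eq_cos_div_sin, Real.cos_arccos hk1 hk2, Real.sin_arccos, hsq2, hsq1]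
  have h2ab : (2 : ℝ) * a * b ≠ 0 := by positivity
  have h2bc : (2 : ℝ) * b * c ≠ 0 := by positivity
  field_simp
  ring

theorem angle_partial_deriv_eq_cot
    (l : Fin 3 → Fin 3 → ℝ)
    (hsymm : ∀ i j, l i j = l j i)
    (hpos : ∀ i j, i ≠ j → 0 < l i j)
    (htri : ∀ i : Fin 3, l (i + 1) (i + 2) < l i (i + 1) + l i (i + 2))
    (w : Fin 3 → ℝ)
    (hw : ∀ i : Fin 3,
      scaledLen l w (i + 1) (i + 2) < scaledLen l w i (i + 1) + scaledLen l w i (i + 2))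
    (i j k : Fin 3) (hij : i ≠ j) (hjk : j ≠ k) (hik : i ≠ k) :
    DifferentiableAt ℝ (scaledAngle l i) w ∧
    fderiv ℝ (scaledAngle l i) w (Pi.single j 1) = Real.cot (scaledAngle l k w) := by
  have e21 : ∀ m : Fin 3, m + 2 + 1 = m := by decide
  have e22 : ∀ m : Fin 3, m + 2 + 2 = m + 1 := by decide
  have e11 : ∀ m : Fin 3, m + 1 + 1 = m + 2 := by decide
  have e12 : ∀ m : Fin 3, m + 1 + 2 = m := by decide
  have n1 : ∀ m : Fin 3, m ≠ m + 1 := by decide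
  have n2 : ∀ m : Fin 3, m ≠ m + 2 := by decide
  have n3 : ∀ m : Fin 3, m + 2 ≠ m + 1 := by decide
  have n12 : ∀ m : Fin 3, m + 1 ≠ m + 2 := by decide
  have hcase : (j = i + 1 ∧ k = i + 2) ∨ (j = i + 2 ∧ k = i + 1) := by
    revert hij hjk hik; revert i j k; decide
  have hT1 : Real.exp (w (i+1) + w (i+2)) * l (i+1) (i+2)
      < Real.exp (w i + w (i+1)) * l i (i+1) + Real.exp (w i + w (i+2)) * l i (i+2) := by
    simpa [scaledLen] using hw i
  have hT2 : Real.exp (w i + w (i+1)) * l i (i+1)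
      < Real.exp (w i + w (i+2)) * l i (i+2) + Real.exp (w (i+1) + w (i+2)) * l (i+1) (i+2) := by
    have h := hw (i+2)
    rw [e21, e22] at h
    simp only [scaledLen] at h
    rw [hsymm (i+2) i, hsymm (i+2) (i+1), add_comm (w (i+2)) (w i),
      add_comm (w (i+2)) (w (i+1))] at h
    exact h
  have hT3 : Real.exp (w i + w (i+2)) * l i (i+2)
      < Real.exp (w i + w (i+1)) * l i (i+1) + Real.exp (w (i+1) + w (i+2)) * l (i+1) (i+2) := by
    have h := hw (i+1)
    rw [e11, e12] at h
    simp only [scaledLen] at h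
    rw [hsymm (i+2) i, hsymm (i+1) i, add_comm (w (i+2)) (w i), add_comm (w (i+1)) (w i)] at h
    linarith
  rcases hcase with ⟨hj, hk⟩ | ⟨hj, hk⟩ <;> subst hj <;> subst hk
  · -- j = i+1, k = i+2
    have H := core i (i+1) (i+2) (n1 i) (n3 i)
      (l i (i+1)) (l i (i+2)) (l (i+1) (i+2))
      (hpos i (i+1) (n1 i)) (hpos i (i+2) (n2 i)) (hpos (i+1) (i+2) (n12 i))
      w hT1 hT2 hT3
    have hFun : scaledAngle l i = (fun v => Real.arccos
        ((Real.exp (v i + v (i+1)) * l i (i+1) * (Real.exp (v i + v (i+1)) * l i (i+1))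
          + Real.exp (v i + v (i+2)) * l i (i+2) * (Real.exp (v i + v (i+2)) * l i (i+2))
          - Real.exp (v (i+1) + v (i+2)) * l (i+1) (i+2)
            * (Real.exp (v (i+1) + v (i+2)) * l (i+1) (i+2)))
          * (2 * (Real.exp (v i + v (i+1)) * l i (i+1))
            * (Real.exp (v i + v (i+2)) * l i (i+2)))⁻¹)) := by
      funext v
      simp only [scaledAngle, scaledLen]
      congr 1
      ring
    have hAng : scaledAngle l (i+2) w = Real.arccos
        ((Real.exp (w i + w (i+2)) * l i (i+2) * (Real.exp (w i + w (i+2)) * l i (i+2))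
          + Real.exp (w (i+1) + w (i+2)) * l (i+1) (i+2)
            * (Real.exp (w (i+1) + w (i+2)) * l (i+1) (i+2))
          - Real.exp (w i + w (i+1)) * l i (i+1) * (Real.exp (w i + w (i+1)) * l i (i+1)))
          * (2 * (Real.exp (w i + w (i+2)) * l i (i+2))
            * (Real.exp (w (i+1) + w (i+2)) * l (i+1) (i+2)))⁻¹) := by
      simp only [scaledAngle, scaledLen, e21, e22]
      rw [hsymm (i+2) i, hsymm (i+2) (i+1), add_comm (w (i+2)) (w i),
        add_comm (w (i+2)) (w (i+1))]
      congr 1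
      ring
    rw [hFun, hAng]
    exact H
  · -- j = i+2, k = i+1
    have t1' : Real.exp (w (i+2) + w (i+1)) * l (i+1) (i+2)
        < Real.exp (w i + w (i+2)) * l i (i+2) + Real.exp (w i + w (i+1)) * l i (i+1) := by
      rw [add_comm (w (i+2)) (w (i+1))]; linarith
    have t2' : Real.exp (w i + w (i+2)) * l i (i+2)
        < Real.exp (w i + w (i+1)) * l i (i+1)
          + Real.exp (w (i+2) + w (i+1)) * l (i+1) (i+2) := by
      rw [add_comm (w (i+2)) (w (i+1))]; linarith
    have t3' : Real.exp (w i + w (i+1)) * l i (i+1)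
        < Real.exp (w i + w (i+2)) * l i (i+2)
          + Real.exp (w (i+2) + w (i+1)) * l (i+1) (i+2) := by
      rw [add_comm (w (i+2)) (w (i+1))]; linarith
    have H := core i (i+2) (i+1) (n2 i) (n12 i)
      (l i (i+2)) (l i (i+1)) (l (i+1) (i+2))
      (hpos i (i+2) (n2 i)) (hpos i (i+1) (n1 i)) (hpos (i+1) (i+2) (n12 i))
      w t1' t2' t3'
    have hFun : scaledAngle l i = (fun v => Real.arccos
        ((Real.exp (v i + v (i+2)) * l i (i+2) * (Real.exp (v i + v (i+2)) * l i (i+2))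
          + Real.exp (v i + v (i+1)) * l i (i+1) * (Real.exp (v i + v (i+1)) * l i (i+1))
          - Real.exp (v (i+2) + v (i+1)) * l (i+1) (i+2)
            * (Real.exp (v (i+2) + v (i+1)) * l (i+1) (i+2)))
          * (2 * (Real.exp (v i + v (i+2)) * l i (i+2))
            * (Real.exp (v i + v (i+1)) * l i (i+1)))⁻¹)) := by
      funext v
      simp only [scaledAngle, scaledLen]
      rw [add_comm (v (i+1)) (v (i+2))]
      congr 1
      ring
    have hAng : scaledAngle l (i+1) w = Real.arccos
        ((Real.exp (w i + w (i+1)) * l i (i+1) * (Real.exp (w i + w (i+1)) * l i (i+1))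
          + Real.exp (w (i+2) + w (i+1)) * l (i+1) (i+2)
            * (Real.exp (w (i+2) + w (i+1)) * l (i+1) (i+2))
          - Real.exp (w i + w (i+2)) * l i (i+2) * (Real.exp (w i + w (i+2)) * l i (i+2)))
          * (2 * (Real.exp (w i + w (i+1)) * l i (i+1))
            * (Real.exp (w (i+2) + w (i+1)) * l (i+1) (i+2)))⁻¹) := by
      simp only [scaledAngle, scaledLen, e11, e12]
      rw [hsymm (i+1) i, hsymm (i+2) i, add_comm (w (i+1)) (w i), add_comm (w (i+2)) (w i),
        add_comm (w (i+1)) (w (i+2))]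
      congr 1
      ring
    rw [hFun, hAng]
    exact H
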